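/- Let n ≥ 1, let a, b ∈ ℝ, and let P be an n×n real positive definite matrix. Then the merit function φ₁(Q) = (1/2) · trace((a • I − b • Q⁻¹) * (a • I − b • Q⁻¹)), defined on n×n real matrices, is Fréchet differentiable at P with derivative V ↦ b · trace((a • I − b • P⁻¹) * P⁻¹ * V * P⁻¹); equivalently, with respect to the Riemannian metric ⟨U, V⟩_P = trace(V P⁻¹ U P⁻¹), its gradient at P is a b • I − b² • P⁻¹. -/

import Mathlib

open Matrix

attribute [local instance] Matrix.frobeniusSeminormedAddCommGroup
  Matrix.frobeniusNormedAddCommGroup Matrix.frobeniusNormedSpace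

/-- for `P` positive definite, the merit function
`φ₁(Q) = ½ tr((a I - b Q⁻¹) (a I - b Q⁻¹))` is Fréchet differentiable at `P` with
derivative `V ↦ b tr((a I - b P⁻¹) P⁻¹ V P⁻¹)`; equivalently, with respect to the
affine-invariant metric `⟨U, V⟩_P = tr(V P⁻¹ U P⁻¹)`, its Riemannian gradient at `P`
is `a b I - b² P⁻¹`. -/
theorem phi1_fderiv {n : ℕ} (hn : 1 ≤ n) (a b : ℝ)
    (P : Matrix (Fin n) (Fin n) ℝ) (hP : P.PosDef) :
    ∃ L : Matrix (Fin n) (Fin n) ℝ →L[ℝ] ℝ,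
      HasFDerivAt
        (fun Q : Matrix (Fin n) (Fin n) ℝ =>
          (1 / 2 : ℝ) * ((a • (1 : Matrix (Fin n) (Fin n) ℝ) - b • Q⁻¹) *
            (a • (1 : Matrix (Fin n) (Fin n) ℝ) - b • Q⁻¹)).trace)
        L P ∧
      (∀ V : Matrix (Fin n) (Fin n) ℝ,
        L V = b * ((a • (1 : Matrix (Fin n) (Fin n) ℝ) - b • P⁻¹) *
          P⁻¹ * V * P⁻¹).trace) ∧
      (∀ V : Matrix (Fin n) (Fin n) ℝ,
        L V = (V * P⁻¹ *
          ((a * b) • (1 : Matrix (Fin n) (Fin n) ℝ) - (b ^ 2) • P⁻¹) * P⁻¹).trace) := by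
  classical
  letI : NormedRing (Matrix (Fin n) (Fin n) ℝ) := Matrix.frobeniusNormedRing
  letI : NormedAlgebra ℝ (Matrix (Fin n) (Fin n) ℝ) := Matrix.frobeniusNormedAlgebra
  have hu : IsUnit P := (Matrix.isUnit_iff_isUnit_det P).mpr
    (isUnit_iff_ne_zero.mpr hP.det_pos.ne')
  have hcoe : ((hu.unit⁻¹ : (Matrix (Fin n) (Fin n) ℝ)ˣ) : Matrix (Fin n) (Fin n) ℝ) = P⁻¹ := by
    rw [← Ring.inverse_unit hu.unit, hu.unit_spec, Matrix.nonsing_inv_eq_ringInverse]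
  have hinv : HasFDerivAt (fun Q : Matrix (Fin n) (Fin n) ℝ => Q⁻¹)
      (-ContinuousLinearMap.mulLeftRight ℝ (Matrix (Fin n) (Fin n) ℝ) P⁻¹ P⁻¹) P := by
    have h := hasFDerivAt_ringInverse (𝕜 := ℝ) hu.unit
    rw [hcoe, hu.unit_spec] at h
    have hfun : (fun Q : Matrix (Fin n) (Fin n) ℝ => Q⁻¹) = Ring.inverse := by
      funext Q; exact Matrix.nonsing_inv_eq_ringInverse Q
    rw [hfun]
    exact h
  have hg : HasFDerivAt
      (fun Q : Matrix (Fin n) (Fin n) ℝ => a • (1 : Matrix (Fin n) (Fin n) ℝ) - b • Q⁻¹)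
      (0 -
        b • (-ContinuousLinearMap.mulLeftRight ℝ (Matrix (Fin n) (Fin n) ℝ) P⁻¹ P⁻¹)) P :=
    (hasFDerivAt_const _ _).sub (hinv.const_smul b)
  have hgg := hg.mul' hg
  set T : Matrix (Fin n) (Fin n) ℝ →L[ℝ] ℝ :=
    LinearMap.toContinuousLinearMap (Matrix.traceLinearMap (Fin n) ℝ ℝ) with hT
  have hfull := (T.hasFDerivAt.comp P hgg).const_mul (1/2 : ℝ)
  set G : Matrix (Fin n) (Fin n) ℝ := a • (1 : Matrix (Fin n) (Fin n) ℝ) - b • P⁻¹ with hG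
  set D : Matrix (Fin n) (Fin n) ℝ →L[ℝ] ℝ :=
    (1/2 : ℝ) • T.comp
      (G • (0 -
          b • -ContinuousLinearMap.mulLeftRight ℝ (Matrix (Fin n) (Fin n) ℝ) P⁻¹ P⁻¹) +
        (MulOpposite.op G • (0 -
          b • -ContinuousLinearMap.mulLeftRight ℝ (Matrix (Fin n) (Fin n) ℝ) P⁻¹ P⁻¹)))
    with hD
  have key : ∀ V : Matrix (Fin n) (Fin n) ℝ,
      D V = b * (G * P⁻¹ * V * P⁻¹).trace := by
    intro V
    have expand : D V = (1/2 : ℝ) * ((G * (b • (P⁻¹ * V * P⁻¹))).trace +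
        ((b • (P⁻¹ * V * P⁻¹)) * G).trace) := by
      show (1/2 : ℝ) * T (G * ((0 : Matrix (Fin n) (Fin n) ℝ) - b • -(P⁻¹ * V * P⁻¹)) +
        ((0 : Matrix (Fin n) (Fin n) ℝ) - b • -(P⁻¹ * V * P⁻¹)) * G) = _
      simp [hT, smul_eq_mul, Matrix.trace_add, mul_assoc]
    rw [expand, Matrix.trace_mul_comm (b • (P⁻¹ * V * P⁻¹)) G]
    rw [Matrix.mul_smul, Matrix.trace_smul]
    have : G * (P⁻¹ * V * P⁻¹) = G * P⁻¹ * V * P⁻¹ := by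
      noncomm_ring
    rw [this, smul_eq_mul]
    ring
  refine ⟨D, hfull, key, ?_⟩
  intro V
  have h1 : (a * b) • (1 : Matrix (Fin n) (Fin n) ℝ) - (b ^ 2) • P⁻¹ = b • G := by
    rw [hG, smul_sub, smul_smul, smul_smul]
    ring_nf
  have h2 : V * P⁻¹ * (b • G) * P⁻¹ = b • (V * P⁻¹ * (G * P⁻¹)) := by
    rw [Matrix.mul_smul, Matrix.smul_mul, mul_assoc]
  rw [key V, h1, h2, Matrix.trace_smul, smul_eq_mul,
    Matrix.trace_mul_comm (V * P⁻¹) (G * P⁻¹), mul_assoc (G * P⁻¹) V P⁻¹]
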